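/- Let A be a commutative noetherian ring and f: M → N a homomorphism of finitely generated A-modules. The induced map f^tl: M^tl → N^tl on torsionless quotients (the restriction of the double dual map f**: M** → N** to the images of the evaluation maps) is surjective if and only if the induced map R(f): R(M) → R(N) of Rees algebras is surjective. -/

import Mathlib

open Module LinearMap TensorProduct

/-- The relation on the tensor algebra whose quotient is the symmetric algebra. -/
inductive SymRel (A : Type) [CommRing A] (M : Type) [AddCommGroup M] [Module A M] :
    TensorAlgebra A M → TensorAlgebra A M → Prop
  | mul_comm (x y : M) : SymRel A M (TensorAlgebra.ι A x * TensorAlgebra.ι A y)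
      (TensorAlgebra.ι A y * TensorAlgebra.ι A x)

/-- The symmetric algebra `Sym(M)` of a module `M`. -/
abbrev SymmAlg (A : Type) [CommRing A] (M : Type) [AddCommGroup M] [Module A M] : Type :=
  RingQuot (SymRel A M)

variable {A : Type} [CommRing A] {M N L : Type} [AddCommGroup M] [Module A M]
  [AddCommGroup N] [Module A N] [AddCommGroup L] [Module A L]

private lemma symmAlg_comm_aux (x y : TensorAlgebra A M) :
    RingQuot.mkAlgHom A (SymRel A M) x * RingQuot.mkAlgHom A (SymRel A M) y =
      RingQuot.mkAlgHom A (SymRel A M) y * RingQuot.mkAlgHom A (SymRel A M) x := by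
  induction x using TensorAlgebra.induction with
  | algebraMap r => simp [Algebra.commutes]
  | ι m =>
    induction y using TensorAlgebra.induction with
    | algebraMap r => simp [Algebra.commutes]
    | ι n => simpa [map_mul] using (RingQuot.mkAlgHom_rel A (SymRel.mul_comm m n))
    | mul a b ha hb => rw [map_mul, ← mul_assoc, ha, mul_assoc, hb, ← mul_assoc]
    | add a b ha hb => rw [map_add, mul_add, add_mul, ha, hb]
  | mul a b ha hb => rw [map_mul, mul_assoc, hb, ← mul_assoc, ha, mul_assoc]
  | add a b ha hb => rw [map_add, add_mul, mul_add, ha, hb]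

noncomputable instance (A : Type) [CommRing A] (M : Type) [AddCommGroup M] [Module A M] :
    CommRing (SymmAlg A M) :=
  { (inferInstance : Ring (SymmAlg A M)) with
    mul_comm := fun a b => by
      obtain ⟨x, rfl⟩ := RingQuot.mkAlgHom_surjective A (SymRel A M) a
      obtain ⟨y, rfl⟩ := RingQuot.mkAlgHom_surjective A (SymRel A M) b
      exact symmAlg_comm_aux x y }

/-- The canonical inclusion of `M` into the degree-one part of `Sym(M)`. -/
noncomputable def symι (A : Type) [CommRing A] {M : Type} [AddCommGroup M] [Module A M] :
    M →ₗ[A] SymmAlg A M :=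
  (RingQuot.mkAlgHom A (SymRel A M)).toLinearMap ∘ₗ TensorAlgebra.ι A

/-- Functoriality of the symmetric algebra: `Sym(g) : Sym(M) → Sym(N)`. -/
noncomputable def symMap (A : Type) [CommRing A] {M N : Type} [AddCommGroup M] [Module A M]
    [AddCommGroup N] [Module A N] (g : M →ₗ[A] N) : SymmAlg A M →ₐ[A] SymmAlg A N :=
  RingQuot.liftAlgHom A ⟨TensorAlgebra.lift A ((symι A) ∘ₗ g), by
    intro x y h
    cases h with
    | mul_comm a b => simp [mul_comm]⟩

@[simp] lemma symMap_ι (g : M →ₗ[A] N) (m : M) :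
    symMap A g (symι A m) = symι A (g m) := by
  simp [symMap, symι, RingQuot.liftAlgHom_mkAlgHom_apply]

lemma symmAlg_hom_ext {B : Type} [Semiring B] [Algebra A B] {f g : SymmAlg A M →ₐ[A] B}
    (h : ∀ m : M, f (symι A m) = g (symι A m)) : f = g := by
  have key : f.comp (RingQuot.mkAlgHom A (SymRel A M)) =
      g.comp (RingQuot.mkAlgHom A (SymRel A M)) := by
    apply TensorAlgebra.hom_ext
    apply LinearMap.ext
    intro m
    simpa [symι] using h m
  apply AlgHom.ext
  intro x
  obtain ⟨x, rfl⟩ := RingQuot.mkAlgHom_surjective A (SymRel A M) x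
  exact AlgHom.congr_fun key x

lemma symMap_comp_apply (g : N →ₗ[A] L) (f : M →ₗ[A] N) (x : SymmAlg A M) :
    symMap A (g ∘ₗ f) x = symMap A g (symMap A f x) := by
  have : symMap A (g ∘ₗ f) = (symMap A g).comp (symMap A f) := by
    apply symmAlg_hom_ext
    intro m
    simp
  rw [this]; rfl

/-- The data of a linear map from `M` into a finitely generated free module. -/
structure FreeTarget (A : Type) [CommRing A] (M : Type) [AddCommGroup M] [Module A M] where
  E : Type
  [instAddCommGroup : AddCommGroup E]
  [instModule : Module A E]
  [instFree : Module.Free A E]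
  [instFinite : Module.Finite A E]
  g : M →ₗ[A] E

attribute [instance] FreeTarget.instAddCommGroup FreeTarget.instModule
  FreeTarget.instFree FreeTarget.instFinite

/-- The ideal `I(M) ⊆ Sym(M)`: the intersection over all maps `g : M → E` into finitely
generated free modules of the kernels of `Sym(g)`. -/
noncomputable def reesIdeal (A : Type) [CommRing A] (M : Type) [AddCommGroup M]
    [Module A M] : Ideal (SymmAlg A M) :=
  ⨅ d : FreeTarget A M, RingHom.ker (symMap A d.g)

lemma reesIdeal_le_comap (f : M →ₗ[A] N) :
    reesIdeal A M ≤ Ideal.comap (symMap A f) (reesIdeal A N) := by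
  intro x hx
  simp only [reesIdeal, Ideal.mem_iInf] at hx
  simp only [Ideal.mem_comap, reesIdeal, Ideal.mem_iInf]
  intro d
  have hd := hx ⟨d.E, d.g ∘ₗ f⟩
  rw [RingHom.mem_ker] at hd ⊢
  rw [← symMap_comp_apply]
  exact hd

/-- The Rees algebra `R(M) = Sym(M)/I(M)` of a module `M`. -/
noncomputable abbrev ReesAlg (A : Type) [CommRing A] (M : Type) [AddCommGroup M]
    [Module A M] : Type :=
  SymmAlg A M ⧸ reesIdeal A M

/-- The induced map `R(f) : R(M) → R(N)` of Rees algebras. -/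
noncomputable def reesMap (A : Type) [CommRing A] {M N : Type} [AddCommGroup M]
    [Module A M] [AddCommGroup N] [Module A N] (f : M →ₗ[A] N) :
    ReesAlg A M →ₐ[A] ReesAlg A N :=
  Ideal.quotientMapₐ (reesIdeal A N) (symMap A f) (reesIdeal_le_comap f)


section Aux

/-- `Aᵐᵒᵖ` acts on any `A`-module when `A` is commutative. -/
noncomputable instance (priority := 2000) mopModule (A : Type) [CommRing A] (M : Type)
    [AddCommGroup M] [Module A M] : Module Aᵐᵒᵖ M :=
  Module.compHom M ((RingHom.id A).fromOpposite mul_comm)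

instance (priority := 2000) (A : Type) [CommRing A] (M : Type) [AddCommGroup M] [Module A M] :
    IsCentralScalar A M := ⟨fun _ _ => rfl⟩

instance (priority := 2000) (A : Type) [CommRing A] (M : Type) [AddCommGroup M] [Module A M] :
    SMulCommClass A Aᵐᵒᵖ M := ⟨fun r s m => smul_comm r s.unop m⟩

/-- The truncation map `Sym(M) → A ⊕ M` to the square-zero extension. -/
noncomputable def trunc (A : Type) [CommRing A] {M : Type} [AddCommGroup M] [Module A M] :
    SymmAlg A M →ₐ[A] TrivSqZeroExt A M :=
  RingQuot.liftAlgHom A ⟨TensorAlgebra.lift A (TrivSqZeroExt.inrHom A M), by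
    intro x y h
    cases h with
    | mul_comm a b => simp [TrivSqZeroExt.inr_mul_inr]⟩

@[simp] lemma trunc_ι {A : Type} [CommRing A] {M : Type} [AddCommGroup M] [Module A M] (m : M) :
    trunc A (symι A m) = TrivSqZeroExt.inr m := by
  simp [trunc, symι, RingQuot.liftAlgHom_mkAlgHom_apply]

/-- The degree-one projection `Sym(M) → M`. -/
noncomputable def deg1 (A : Type) [CommRing A] {M : Type} [AddCommGroup M] [Module A M] :
    SymmAlg A M →ₗ[A] M :=
  (TrivSqZeroExt.sndHom A M) ∘ₗ (trunc A).toLinearMap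

@[simp] lemma deg1_ι {A : Type} [CommRing A] {M : Type} [AddCommGroup M] [Module A M] (m : M) :
    deg1 A (symι A m) = m := by
  simp [deg1]

variable {A : Type} [CommRing A] {M N : Type} [AddCommGroup M] [Module A M]
  [AddCommGroup N] [Module A N]

lemma deg1_symMap (f : M →ₗ[A] N) (x : SymmAlg A M) :
    deg1 A (symMap A f x) = f (deg1 A x) := by
  have h : (trunc A).comp (symMap A f) = (TrivSqZeroExt.map f).comp (trunc A) := by
    apply symmAlg_hom_ext
    intro m
    simp
  have := AlgHom.congr_fun h x
  simp only [AlgHom.comp_apply] at this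
  simp [deg1, this]

lemma dualMap_dualMap_eval (f : M →ₗ[A] N) (m : M) :
    f.dualMap.dualMap (Module.Dual.eval A M m) = Module.Dual.eval A N (f m) := by
  ext φ
  rfl

/-- Degree-one part of the Rees ideal lies in the kernel of evaluation. -/
lemma eval_deg1_eq_zero_of_mem_reesIdeal {x : SymmAlg A N} (hx : x ∈ reesIdeal A N) :
    Module.Dual.eval A N (deg1 A x) = 0 := by
  ext φ
  simp only [Module.Dual.eval_apply, LinearMap.zero_apply]
  simp only [reesIdeal, Ideal.mem_iInf] at hx
  have hd := hx ⟨A, φ⟩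
  rw [RingHom.mem_ker] at hd
  have := deg1_symMap (M := N) (N := A) φ x
  rw [hd, map_zero] at this
  exact this.symm

/-- If `ev_N n = 0` then `symι n` lies in the Rees ideal. -/
lemma symι_mem_reesIdeal_of_eval_eq_zero {n : N} (hn : Module.Dual.eval A N n = 0) :
    symι A n ∈ reesIdeal A N := by
  simp only [reesIdeal, Ideal.mem_iInf]
  intro d
  rw [RingHom.mem_ker, symMap_ι]
  have hgn : d.g n = 0 := by
    apply (Module.bijective_dual_eval A d.E).injective
    rw [map_zero]
    ext φ
    have : Module.Dual.eval A d.E (d.g n) φ = Module.Dual.eval A N n (d.g.dualMap φ) := rfl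
    rw [this, hn]
    rfl
  rw [hgn, map_zero]

end Aux

/-- For `f : M → N`, the induced map `f^tl : M^tl → N^tl` on torsionless quotients is
surjective iff `R(f) : R(M) → R(N)` is surjective. -/
theorem stmt9 (A : Type) [CommRing A] [IsNoetherianRing A]
    (M N : Type) [AddCommGroup M] [Module A M] [Module.Finite A M]
    [AddCommGroup N] [Module A N] [Module.Finite A N]
    (f : M →ₗ[A] N) :
    (LinearMap.range (Module.Dual.eval A N) ≤
        Submodule.map f.dualMap.dualMap (LinearMap.range (Module.Dual.eval A M))) ↔
      Function.Surjective (reesMap A f) := by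
  constructor
  · intro h
    have key : ∀ n : N, (Ideal.Quotient.mkₐ A (reesIdeal A N)) (symι A n) ∈
        (reesMap A f).range := by
      intro n
      obtain ⟨φ, ⟨m, rfl⟩, hm⟩ := h ⟨n, rfl⟩
      rw [dualMap_dualMap_eval] at hm
      have hfn : Module.Dual.eval A N (f m - n) = 0 := by rw [map_sub, hm, sub_self]
      have hmem : symι A (f m - n) ∈ reesIdeal A N := symι_mem_reesIdeal_of_eval_eq_zero hfn
      refine ⟨Ideal.Quotient.mkₐ A (reesIdeal A M) (symι A m), ?_⟩
      have hre : reesMap A f (Ideal.Quotient.mkₐ A (reesIdeal A M) (symι A m)) =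
          Ideal.Quotient.mkₐ A (reesIdeal A N) (symMap A f (symι A m)) := rfl
      show reesMap A f (Ideal.Quotient.mkₐ A (reesIdeal A M) (symι A m)) =
        Ideal.Quotient.mkₐ A (reesIdeal A N) (symι A n)
      rw [hre, symMap_ι]
      have : (Ideal.Quotient.mkₐ A (reesIdeal A N)) (symι A (f m - n)) = 0 := by
        simpa using (Ideal.Quotient.eq_zero_iff_mem).2 hmem
      rw [map_sub, map_sub] at this
      have := sub_eq_zero.mp this
      rw [this]
    intro y
    obtain ⟨s, rfl⟩ : ∃ s, Ideal.Quotient.mkₐ A (reesIdeal A N) s = y :=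
      Ideal.Quotient.mk_surjective y
    obtain ⟨t, rfl⟩ := RingQuot.mkAlgHom_surjective A (SymRel A N) s
    have main : ∀ t : TensorAlgebra A N,
        (Ideal.Quotient.mkₐ A (reesIdeal A N)) (RingQuot.mkAlgHom A (SymRel A N) t) ∈
          (reesMap A f).range := by
      intro t
      induction t using TensorAlgebra.induction with
      | algebraMap r =>
        rw [AlgHom.commutes (RingQuot.mkAlgHom A (SymRel A N)) r,
          AlgHom.commutes (Ideal.Quotient.mkₐ A (reesIdeal A N)) r]
        exact Subalgebra.algebraMap_mem _ r
      | ι n => exact key n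
      | mul a b ha hb => rw [map_mul, map_mul]; exact Subalgebra.mul_mem _ ha hb
      | add a b ha hb => rw [map_add, map_add]; exact Subalgebra.add_mem _ ha hb
    exact main t
  · intro h φ hφ
    obtain ⟨n, rfl⟩ := hφ
    obtain ⟨y, hy⟩ := h (Ideal.Quotient.mkₐ A (reesIdeal A N) (symι A n))
    obtain ⟨x, rfl⟩ : ∃ x, Ideal.Quotient.mkₐ A (reesIdeal A M) x = y :=
      Ideal.Quotient.mk_surjective y
    have hre : reesMap A f (Ideal.Quotient.mkₐ A (reesIdeal A M) x) =
        Ideal.Quotient.mkₐ A (reesIdeal A N) (symMap A f x) := rfl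
    rw [hre] at hy
    have hmem : symMap A f x - symι A n ∈ reesIdeal A N := by
      rw [← Ideal.Quotient.eq_zero_iff_mem]
      have : (Ideal.Quotient.mk (reesIdeal A N)) (symMap A f x - symι A n) =
          (Ideal.Quotient.mkₐ A (reesIdeal A N)) (symMap A f x) -
            (Ideal.Quotient.mkₐ A (reesIdeal A N)) (symι A n) := by
        simp [map_sub]
      rw [this, hy, sub_self]
    have h0 := eval_deg1_eq_zero_of_mem_reesIdeal hmem
    rw [map_sub, deg1_symMap, deg1_ι, map_sub] at h0
    refine ⟨Module.Dual.eval A M (deg1 A x), ⟨deg1 A x, rfl⟩, ?_⟩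
    rw [dualMap_dualMap_eval]
    exact sub_eq_zero.mp h0
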